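/- For every intermedium measure λ ∈ I(μ,ν), there exists a cardinal flow (f¹,f²) ∈ F(μ,ν) that glues on λ; explicitly, f¹ = (λ_{|x₂} ⊗ μ_{|x₂}) ⊗ μ₂ and f² = (λ_{|y₁} ⊗ ν_{|y₁}) ⊗ ν₁ works, where λ_{|x₂}, μ_{|x₂}, λ_{|y₁}, ν_{|y₁} denote disintegrations (conditional laws). -/

import Mathlib

open MeasureTheory ProbabilityTheory
open scoped ENNReal ProbabilityTheory

noncomputable section

variable {X₁ X₂ Y₁ Y₂ : Type*} [MeasurableSpace X₁] [MeasurableSpace X₂]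
  [MeasurableSpace Y₁] [MeasurableSpace Y₂]

/-- `π` is a transportation plan (coupling) between `μ` and `ν`. -/
def IsCoupling {A B : Type*} [MeasurableSpace A] [MeasurableSpace B]
    (π : Measure (A × B)) (μ : Measure A) (ν : Measure B) : Prop :=
  π.map Prod.fst = μ ∧ π.map Prod.snd = ν

/-- The minimal transportation (Wasserstein) cost for the cost `c`. -/
noncomputable def Wc {A B : Type*} [MeasurableSpace A] [MeasurableSpace B]
    (c : A → B → ℝ≥0∞) (μ : Measure A) (ν : Measure B) : ℝ≥0∞ :=
  ⨅ π ∈ {π : Measure (A × B) | IsCoupling π μ ν}, ∫⁻ p, c p.1 p.2 ∂π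

/-- `(f1, f2)` is a cardinal flow between `μ ∈ P(X₁ × X₂)` and `ν ∈ P(Y₁ × Y₂)`:
the marginal of `f1` on `X = X₁ × X₂` is `μ`, the marginal of `f2` on `Y = Y₁ × Y₂` is `ν`,
and `f1`, `f2` have the same marginal on `Y₁ × X₂`. -/
def IsCardinalFlow (μ : Measure (X₁ × X₂)) (ν : Measure (Y₁ × Y₂))
    (f1 : Measure ((X₁ × X₂) × Y₁)) (f2 : Measure (X₂ × (Y₁ × Y₂))) : Prop :=
  f1.map Prod.fst = μ ∧ f2.map Prod.snd = ν ∧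
    f1.map (fun p => (p.2, p.1.2)) = f2.map (fun p => (p.2.1, p.1))

/-- The set of cardinal flows between `μ` and `ν`. -/
def Flows (μ : Measure (X₁ × X₂)) (ν : Measure (Y₁ × Y₂)) :
    Set (Measure ((X₁ × X₂) × Y₁) × Measure (X₂ × (Y₁ × Y₂))) :=
  {F | IsProbabilityMeasure F.1 ∧ IsProbabilityMeasure F.2 ∧ IsCardinalFlow μ ν F.1 F.2}

/-- The cardinal flow functional `CT(f¹,f²) = ∫ c₁ df¹ + ∫ c₂ df²`. -/
noncomputable def CT (c₁ : X₁ → Y₁ → ℝ≥0∞) (c₂ : X₂ → Y₂ → ℝ≥0∞)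
    (F : Measure ((X₁ × X₂) × Y₁) × Measure (X₂ × (Y₁ × Y₂))) : ℝ≥0∞ :=
  ∫⁻ q, c₁ q.1.1 q.2 ∂F.1 + ∫⁻ q, c₂ q.1 q.2.2 ∂F.2

/-- `ζ` is a pivot measure between `μ` and `ν` for the separable cost `c₁ + c₂`:
some optimal cardinal flow glues on `ζ`. -/
def IsPivot (μ : Measure (X₁ × X₂)) (ν : Measure (Y₁ × Y₂))
    (c₁ : X₁ → Y₁ → ℝ≥0∞) (c₂ : X₂ → Y₂ → ℝ≥0∞) (ζ : Measure (Y₁ × X₂)) : Prop :=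
  ∃ F ∈ Flows μ ν, F.1.map (fun p => (p.2, p.1.2)) = ζ ∧
    CT c₁ c₂ F = ⨅ G ∈ Flows μ ν, CT c₁ c₂ G


section AuxGlue

variable {α β γ : Type*} [MeasurableSpace α] [MeasurableSpace β] [MeasurableSpace γ]

lemma aux_fst_glue (μ : Measure α) [SFinite μ] (κ : Kernel α β) (η : Kernel α γ)
    [IsMarkovKernel κ] [IsMarkovKernel η] :
    (μ ⊗ₘ (κ ×ₖ η)).map (fun p => (p.1, p.2.1)) = μ ⊗ₘ κ := by
  ext s hs
  rw [Measure.map_apply (by fun_prop) hs, Measure.compProd_apply (hs.preimage (by fun_prop)),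
    Measure.compProd_apply hs]
  congr 1
  ext a
  have : (Prod.mk a ⁻¹' ((fun p : α × β × γ => (p.1, p.2.1)) ⁻¹' s))
      = (Prod.mk a ⁻¹' s) ×ˢ (Set.univ : Set γ) := by
    ext p; simp [Set.mem_preimage]
  rw [this, Kernel.prod_apply, Measure.prod_prod]
  simp

lemma aux_snd_glue (μ : Measure α) [SFinite μ] (κ : Kernel α β) (η : Kernel α γ)
    [IsMarkovKernel κ] [IsMarkovKernel η] :
    (μ ⊗ₘ (κ ×ₖ η)).map (fun p => (p.1, p.2.2)) = μ ⊗ₘ η := by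
  ext s hs
  rw [Measure.map_apply (by fun_prop) hs, Measure.compProd_apply (hs.preimage (by fun_prop)),
    Measure.compProd_apply hs]
  congr 1
  ext a
  have : (Prod.mk a ⁻¹' ((fun p : α × β × γ => (p.1, p.2.2)) ⁻¹' s))
      = (Set.univ : Set β) ×ˢ (Prod.mk a ⁻¹' s) := by
    ext p; simp [Set.mem_preimage]
  rw [this, Kernel.prod_apply, Measure.prod_prod]
  simp

end AuxGlue

theorem stmt7
    [StandardBorelSpace X₁] [Nonempty X₁] [StandardBorelSpace X₂] [Nonempty X₂]
    [StandardBorelSpace Y₁] [Nonempty Y₁] [StandardBorelSpace Y₂] [Nonempty Y₂]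
    (μ : Measure (X₁ × X₂)) (ν : Measure (Y₁ × Y₂))
    [IsProbabilityMeasure μ] [IsProbabilityMeasure ν]
    (lam : Measure (Y₁ × X₂)) [IsProbabilityMeasure lam]
    (hl₂ : lam.map Prod.snd = μ.map Prod.snd) (hl₁ : lam.map Prod.fst = ν.map Prod.fst) :
    ∃ (f1 : Measure ((X₁ × X₂) × Y₁)) (f2 : Measure (X₂ × (Y₁ × Y₂))),
      IsProbabilityMeasure f1 ∧ IsProbabilityMeasure f2 ∧
      IsCardinalFlow μ ν f1 f2 ∧ f1.map (fun p => (p.2, p.1.2)) = lam := by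
  set μ' : Measure (X₂ × X₁) := μ.map Prod.swap with hμ'
  set lam' : Measure (X₂ × Y₁) := lam.map Prod.swap with hlam'
  have hμ'P : IsProbabilityMeasure μ' := Measure.isProbabilityMeasure_map measurable_swap.aemeasurable
  have hlam'P : IsProbabilityMeasure lam' := Measure.isProbabilityMeasure_map measurable_swap.aemeasurable
  have hfst : lam'.fst = μ'.fst := by
    simp only [Measure.fst, hμ', hlam', Measure.map_map measurable_fst measurable_swap]
    exact hl₂
  have hfst2 : lam.fst = ν.fst := by
    simpa [Measure.fst] using hl₁
  set f1 : Measure ((X₁ × X₂) × Y₁) :=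
    (μ'.fst ⊗ₘ (μ'.condKernel ×ₖ lam'.condKernel)).map
      (fun p => ((p.2.1, p.1), p.2.2)) with hf1
  set f2 : Measure (X₂ × (Y₁ × Y₂)) :=
    (lam.fst ⊗ₘ (lam.condKernel ×ₖ ν.condKernel)).map
      (fun p => (p.2.1, (p.1, p.2.2))) with hf2
  have hmf1 : Measurable (fun p : X₂ × (X₁ × Y₁) => ((p.2.1, p.1), p.2.2)) := by fun_prop
  have hmf2 : Measurable (fun p : Y₁ × (X₂ × Y₂) => (p.2.1, (p.1, p.2.2))) := by fun_prop
  have h1a : f1.map Prod.fst = μ := by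
    rw [hf1, Measure.map_map measurable_fst hmf1]
    have : (Prod.fst ∘ fun p : X₂ × (X₁ × Y₁) => ((p.2.1, p.1), p.2.2))
        = Prod.swap ∘ (fun p : X₂ × (X₁ × Y₁) => (p.1, p.2.1)) := rfl
    rw [this, ← Measure.map_map measurable_swap (by fun_prop), aux_fst_glue,
      Measure.disintegrate, hμ', Measure.map_map measurable_swap measurable_swap]
    simp
  have h1b : f1.map (fun p => (p.2, p.1.2)) = lam := by
    rw [hf1, Measure.map_map (by fun_prop) hmf1]
    have : ((fun p : (X₁ × X₂) × Y₁ => (p.2, p.1.2)) ∘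
        fun p : X₂ × (X₁ × Y₁) => ((p.2.1, p.1), p.2.2))
        = Prod.swap ∘ (fun p : X₂ × (X₁ × Y₁) => (p.1, p.2.2)) := rfl
    rw [this, ← Measure.map_map measurable_swap (by fun_prop), aux_snd_glue, ← hfst,
      Measure.disintegrate, hlam', Measure.map_map measurable_swap measurable_swap]
    simp
  have h2a : f2.map Prod.snd = ν := by
    rw [hf2, Measure.map_map measurable_snd hmf2]
    have : (Prod.snd ∘ fun p : Y₁ × (X₂ × Y₂) => (p.2.1, (p.1, p.2.2)))
        = (fun p : Y₁ × (X₂ × Y₂) => (p.1, p.2.2)) := rfl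
    rw [this, aux_snd_glue, hfst2, Measure.disintegrate]
  have h2b : f2.map (fun p => (p.2.1, p.1)) = lam := by
    rw [hf2, Measure.map_map (by fun_prop) hmf2]
    have : ((fun p : X₂ × (Y₁ × Y₂) => (p.2.1, p.1)) ∘
        fun p : Y₁ × (X₂ × Y₂) => (p.2.1, (p.1, p.2.2)))
        = (fun p : Y₁ × (X₂ × Y₂) => (p.1, p.2.1)) := rfl
    rw [this, aux_fst_glue, Measure.disintegrate]
  refine ⟨f1, f2, Measure.isProbabilityMeasure_map hmf1.aemeasurable,
    Measure.isProbabilityMeasure_map hmf2.aemeasurable, ⟨h1a, h2a, ?_⟩, h1b⟩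
  rw [h1b, h2b]
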